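/- Let Σ be an n×n positive semidefinite matrix and define, for u ∈ {0,1}ⁿ and D(u) the diagonal matrix with entries u, φ̃(ρ) = max over u ∈ {0,1}ⁿ and y with yᵀy ≤ 1 of yᵀ D(u) Σ D(u) y − ρ·𝟏ᵀu. Then φ̃(ρ) equals φ̄(ρ) := max{xᵀΣx − ρ·Card(x) : ‖x‖₂ ≤ 1}. -/
import Mathlib

open Matrix
open scoped BigOperators

/-- Number of nonzero entries of a vector. -/
noncomputable def card {n : ℕ} (x : Fin n → ℝ) : ℕ := Set.ncard {i | x i ≠ 0}

lemma diagMulVec {n : ℕ} (u y : Fin n → ℝ) :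
    (Matrix.diagonal u).mulVec y = fun i => u i * y i := by
  funext i; rw [Matrix.mulVec_diagonal]

lemma quad_eq {n : ℕ} (S : Matrix (Fin n) (Fin n) ℝ) (u y : Fin n → ℝ) :
    y ⬝ᵥ (Matrix.diagonal u * S * Matrix.diagonal u).mulVec y =
      (fun i => u i * y i) ⬝ᵥ S.mulVec (fun i => u i * y i) := by
  rw [← Matrix.mulVec_mulVec, ← Matrix.mulVec_mulVec, diagMulVec]
  simp only [dotProduct, diagMulVec]
  exact Finset.sum_congr rfl fun i _ => by ring

lemma card_eq {n : ℕ} (x : Fin n → ℝ) :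
    (card x : ℝ) = ∑ i, (if x i = 0 then (0:ℝ) else 1) := by
  classical
  rw [Finset.sum_ite, Finset.sum_const, Finset.sum_const]
  simp only [smul_zero, zero_add, nsmul_eq_mul, mul_one]
  congr 1
  rw [card, Set.ncard_eq_toFinset_card']
  congr 1
  ext i
  simp

theorem stmt6 {n : ℕ} (S : Matrix (Fin n) (Fin n) ℝ) (hS : S.PosSemidef)
    (ρ : ℝ) (hρ : 0 ≤ ρ) :
    sSup {v | ∃ u : Fin n → ℝ, ∃ y : Fin n → ℝ,
        (∀ i, u i = 0 ∨ u i = 1) ∧ (∑ i, y i ^ 2) ≤ 1 ∧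
        v = y ⬝ᵥ (Matrix.diagonal u * S * Matrix.diagonal u).mulVec y - ρ * ∑ i, u i} =
      sSup {v | ∃ x : Fin n → ℝ, (∑ i, x i ^ 2) ≤ 1 ∧
        v = x ⬝ᵥ S.mulVec x - ρ * (card x : ℝ)} := by
  classical
  set A := {v | ∃ u : Fin n → ℝ, ∃ y : Fin n → ℝ,
        (∀ i, u i = 0 ∨ u i = 1) ∧ (∑ i, y i ^ 2) ≤ 1 ∧
        v = y ⬝ᵥ (Matrix.diagonal u * S * Matrix.diagonal u).mulVec y - ρ * ∑ i, u i} with hA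
  set B := {v | ∃ x : Fin n → ℝ, (∑ i, x i ^ 2) ≤ 1 ∧
        v = x ⬝ᵥ S.mulVec x - ρ * (card x : ℝ)} with hB
  -- B ⊆ A
  have hBA : B ⊆ A := by
    rintro v ⟨x, hx, rfl⟩
    refine ⟨fun i => if x i = 0 then 0 else 1, x, fun i => by by_cases h : x i = 0 <;> simp [h],
      hx, ?_⟩
    have hux : (fun i => (if x i = 0 then (0:ℝ) else 1) * x i) = x := by
      funext i; by_cases h : x i = 0 <;> simp [h]
    rw [quad_eq, hux, card_eq]
  -- domination: every element of A is ≤ some element of B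
  have hdom : ∀ v ∈ A, ∃ w ∈ B, v ≤ w := by
    rintro v ⟨u, y, hu, hy, rfl⟩
    set x : Fin n → ℝ := fun i => u i * y i with hxdef
    have hu01 : ∀ i, 0 ≤ u i ∧ u i ≤ 1 := by
      intro i; rcases hu i with h | h <;> simp [h]
    have hmem : (∑ i, x i ^ 2) ≤ 1 := by
      refine le_trans (Finset.sum_le_sum fun i _ => ?_) hy
      have : x i ^ 2 = u i ^ 2 * y i ^ 2 := by rw [hxdef]; ring
      rw [this]
      have h1 : u i ^ 2 ≤ 1 := by
        rcases hu i with h | h <;> simp [h]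
      nlinarith [sq_nonneg (y i), sq_nonneg (u i)]
    refine ⟨x ⬝ᵥ S.mulVec x - ρ * (card x : ℝ), ⟨x, hmem, rfl⟩, ?_⟩
    rw [quad_eq]
    have hcard : (card x : ℝ) ≤ ∑ i, u i := by
      rw [card_eq]
      refine Finset.sum_le_sum fun i _ => ?_
      by_cases h : x i = 0
      · simp [h, (hu01 i).1]
      · have : u i ≠ 0 := fun h0 => h (by simp [hxdef, h0])
        rcases hu i with h' | h'
        · exact absurd h' this
        · simp [h, h']
    have := mul_le_mul_of_nonneg_left hcard hρ
    simp only [hxdef]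
    linarith
  have hAne : A.Nonempty := ⟨_, hBA ⟨0, by simp, rfl⟩⟩
  have hBne : B.Nonempty := ⟨_, ⟨0, by simp, rfl⟩⟩
  by_cases hbdd : BddAbove B
  · refine le_antisymm ?_ (csSup_le_csSup ?_ hBne hBA)
    · refine csSup_le hAne fun v hv => ?_
      obtain ⟨w, hw, hvw⟩ := hdom v hv
      exact hvw.trans (le_csSup hbdd hw)
    · obtain ⟨b, hb⟩ := hbdd
      refine ⟨b, fun v hv => ?_⟩
      obtain ⟨w, hw, hvw⟩ := hdom v hv
      exact hvw.trans (hb hw)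
  · have hAub : ¬ BddAbove A := fun h => hbdd (h.mono hBA)
    rw [Real.sSup_of_not_bddAbove hAub, Real.sSup_of_not_bddAbove hbdd]
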